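/- Let ρ : V∖{0} → R be an 𝔽_q-reciprocal map. Then the polynomial e_ρ(X) := X·∏_{v∈V∖{0}} (1 − ρ(v)·X) ∈ R[X] is 𝔽_q-linear; that is, for every natural number k that is not a power of q, the coefficient of X^k in e_ρ is zero. (Proposition 1.15 of the paper.) -/

import Mathlib

noncomputable section

/-- An `𝔽_q`-reciprocal map `V∖{0} → R` (encoded as a total function whose value at `0`
is irrelevant): (a) `ρ(v)ρ(w) = ρ(v+w)(ρ(v)+ρ(w))` whenever `v, w, v+w ≠ 0`, and
(b) `α ρ(αv) = ρ(v)` for all `α ∈ 𝔽_q^×` and `v ≠ 0`. -/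
def IsFqRecip (Fq : Type) [Field Fq] {V R : Type} [AddCommGroup V] [Module Fq V]
    [CommRing R] [Algebra Fq R] (ρ : V → R) : Prop :=
  (∀ v w : V, v ≠ 0 → w ≠ 0 → v + w ≠ 0 → ρ v * ρ w = ρ (v + w) * (ρ v + ρ w)) ∧
  (∀ (α : Fqˣ) (v : V), v ≠ 0 →
    algebraMap Fq R (α : Fq) * ρ ((α : Fq) • v) = ρ v)

/-- The polynomial `e_ρ(X) = X ⬝ ∏_{v ∈ V∖{0}} (1 - ρ(v) X) ∈ R[X]`. -/
def eRho {Fq V R : Type} [Field Fq] [AddCommGroup V] [Module Fq V]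
    [CommRing R] [Algebra Fq R] (ρ : V → R) : Polynomial R :=
  Polynomial.X * ∏ᶠ v ∈ {v : V | v ≠ 0}, (1 - Polynomial.C (ρ v) * Polynomial.X)

namespace Stmt17Aux

open Polynomial
open scoped Classical

variable {Fq : Type} [Field Fq] [Fintype Fq] {R : Type} [CommRing R] [Algebra Fq R]

local notation "q" => Fintype.card Fq

lemma prod_X_sub_C_univ : ∏ a : Fq, (X - C a) = X ^ q - X := by
  have h := Polynomial.prod_multiset_X_sub_C_of_monic_of_roots_card_eq
    (p := (X ^ q - X : Fq[X])) ?_ ?_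
  · rw [FiniteField.roots_X_pow_card_sub_X] at h
    rw [← h]; rfl
  · apply Polynomial.monic_X_pow_sub
    simpa using Fintype.one_lt_card
  · rw [FiniteField.roots_X_pow_card_sub_X,
      FiniteField.X_pow_card_sub_X_natDegree_eq Fq Fintype.one_lt_card]
    simp

lemma prod_X_sub_C_units : ∏ a ∈ Finset.univ.erase (0 : Fq), (X - C a) = X ^ (q - 1) - 1 := by
  have hq : 1 ≤ q := Fintype.card_pos
  have h0 : (X : Fq[X]) ≠ 0 := X_ne_zero
  apply mul_left_cancel₀ h0
  have : (X : Fq[X]) * ∏ a ∈ Finset.univ.erase (0 : Fq), (X - C a) = ∏ a : Fq, (X - C a) := by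
    rw [← Finset.mul_prod_erase Finset.univ _ (Finset.mem_univ (0 : Fq))]
    simp
  rw [this, prod_X_sub_C_univ, mul_sub, ← pow_succ', Nat.sub_add_cancel hq, mul_one]

lemma prod_one_sub_C_units : ∏ a ∈ Finset.univ.erase (0 : Fq), (1 - C a * X) = 1 - X ^ (q - 1) := by
  have hfac : ∀ a ∈ Finset.univ.erase (0 : Fq), (1 - C a * X : Fq[X]) = -C a * (X - C a⁻¹) := by
    intro a ha
    have ha0 : a ≠ 0 := Finset.ne_of_mem_erase ha
    rw [neg_mul, mul_sub, ← C_mul, mul_inv_cancel₀ ha0, C_1]; ring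
  rw [Finset.prod_congr rfl hfac, Finset.prod_mul_distrib]
  have h2 : ∏ a ∈ Finset.univ.erase (0 : Fq), (X - C a⁻¹ : Fq[X]) = X ^ (q - 1) - 1 := by
    rw [← prod_X_sub_C_units]
    apply Finset.prod_nbij' (fun a => a⁻¹) (fun a => a⁻¹) <;>
      simp +contextual [Finset.mem_erase]
  have h3 : ∏ a ∈ Finset.univ.erase (0 : Fq), (-C a : Fq[X]) = C (-1 : Fq) := by
    have he := congrArg (Polynomial.eval 0) (prod_X_sub_C_units (Fq := Fq))
    simp only [eval_prod, eval_sub, eval_X, eval_C, eval_pow, eval_one, zero_sub] at he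
    have hq1 : q - 1 ≠ 0 := by have := Fintype.one_lt_card (α := Fq); omega
    rw [zero_pow hq1, zero_sub] at he
    calc ∏ a ∈ Finset.univ.erase (0 : Fq), (-C a : Fq[X])
        = C (∏ a ∈ Finset.univ.erase (0 : Fq), (-a)) := by rw [map_prod]; simp
      _ = C (-1 : Fq) := by rw [he]
  rw [h2, h3]
  simp only [map_neg, C_1]; ring

variable (c : R)

lemma units_prod :
    ∏ α ∈ Finset.univ.erase (0 : Fq), (1 - C (algebraMap Fq R α⁻¹ * c) * X)
      = 1 - C (c ^ (q - 1)) * X ^ (q - 1) := by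
  have hre : ∏ α ∈ Finset.univ.erase (0 : Fq), (1 - C (algebraMap Fq R α⁻¹ * c) * X)
      = ∏ α ∈ Finset.univ.erase (0 : Fq), (1 - C (algebraMap Fq R α * c) * X) := by
    apply Finset.prod_nbij' (fun a => a⁻¹) (fun a => a⁻¹) <;>
      simp +contextual [Finset.mem_erase]
  rw [hre]
  have h2 := congrArg (Polynomial.aeval (C c * X : R[X])) (prod_one_sub_C_units (Fq := Fq))
  rw [map_prod, map_sub, map_one, map_pow, aeval_X] at h2
  rw [mul_pow, ← C.map_pow] at h2
  rw [← h2]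
  apply Finset.prod_congr rfl
  intro a _
  simp only [map_sub, map_one, map_mul, aeval_C, aeval_X, Polynomial.algebraMap_apply]
  ring

lemma dagger (c : R) (S : Finset Fq) :
    ∀ x : Fq → R,
      (∀ α ∈ S, ∀ β ∈ S, α ≠ β →
        x α * x β = algebraMap Fq R ((α - β)⁻¹) * c * (x β - x α)) →
      ∏ α ∈ S, (1 - C (x α) * X)
        = 1 - ∑ α ∈ S, C (x α) * X *
            ∏ β ∈ S.erase α, (1 - C (algebraMap Fq R ((β - α)⁻¹) * c) * X) := by
  induction S using Finset.induction_on with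
  | empty => intro x _; simp
  | @insert γ S hγ ih =>
    intro x H
    have HxS : ∀ α ∈ S, ∀ β ∈ S, α ≠ β →
        x α * x β = algebraMap Fq R ((α - β)⁻¹) * c * (x β - x α) := fun α hα β hβ hne =>
      H α (Finset.mem_insert_of_mem hα) β (Finset.mem_insert_of_mem hβ) hne
    have Hx' : ∀ α ∈ S, ∀ β ∈ S, α ≠ β →
        (algebraMap Fq R ((α - γ)⁻¹) * c) * (algebraMap Fq R ((β - γ)⁻¹) * c)
          = algebraMap Fq R ((α - β)⁻¹) * c *
            ((algebraMap Fq R ((β - γ)⁻¹) * c) - (algebraMap Fq R ((α - γ)⁻¹) * c)) := by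
      intro α hα β hβ hne
      have hαγ : α - γ ≠ 0 := sub_ne_zero.2 (by rintro rfl; exact hγ hα)
      have hβγ : β - γ ≠ 0 := sub_ne_zero.2 (by rintro rfl; exact hγ hβ)
      have hαβ : α - β ≠ 0 := sub_ne_zero.2 hne
      have key := congrArg (algebraMap Fq R)
        (show ((α - γ)⁻¹ * (β - γ)⁻¹ : Fq) = (α - β)⁻¹ * ((β - γ)⁻¹ - (α - γ)⁻¹) by
          field_simp; ring)
      rw [map_mul, map_mul, map_sub] at key
      linear_combination (c ^ 2) * key
    have ih' : ∏ β ∈ S, (1 - C (algebraMap Fq R ((β - γ)⁻¹) * c) * X)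
        = 1 - ∑ β ∈ S, C (algebraMap Fq R ((β - γ)⁻¹) * c) * X *
            ∏ δ ∈ S.erase β, (1 - C (algebraMap Fq R ((δ - β)⁻¹) * c) * X) :=
      ih (fun β => algebraMap Fq R ((β - γ)⁻¹) * c) Hx'
    rw [Finset.prod_insert hγ, ih x HxS, Finset.sum_insert hγ, Finset.erase_insert hγ, ih']
    have hsumcongr : ∑ α ∈ S, C (x α) * X *
            ∏ β ∈ (insert γ S).erase α, (1 - C (algebraMap Fq R ((β - α)⁻¹) * c) * X)
        = ∑ α ∈ S, C (x α) * X *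
            ((1 - C (algebraMap Fq R ((γ - α)⁻¹) * c) * X) *
              ∏ β ∈ S.erase α, (1 - C (algebraMap Fq R ((β - α)⁻¹) * c) * X)) := by
      apply Finset.sum_congr rfl
      intro α hα
      have hne : γ ≠ α := by rintro rfl; exact hγ hα
      rw [Finset.erase_insert_of_ne hne,
        Finset.prod_insert (fun h => hγ (Finset.mem_of_mem_erase h))]
    rw [hsumcongr]
    have per : ∀ α ∈ S,
        C (x α) * X * ((1 - C (algebraMap Fq R ((γ - α)⁻¹) * c) * X) *
            ∏ β ∈ S.erase α, (1 - C (algebraMap Fq R ((β - α)⁻¹) * c) * X))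
          - C (x α) * X * ∏ β ∈ S.erase α, (1 - C (algebraMap Fq R ((β - α)⁻¹) * c) * X)
          + C (x γ) * X * (C (x α) * X *
            ∏ β ∈ S.erase α, (1 - C (algebraMap Fq R ((β - α)⁻¹) * c) * X))
          - C (x γ) * X * (C (algebraMap Fq R ((α - γ)⁻¹) * c) * X *
            ∏ β ∈ S.erase α, (1 - C (algebraMap Fq R ((β - α)⁻¹) * c) * X)) = 0 := by
      intro α hα
      have hne : α ≠ γ := by rintro rfl; exact hγ hα
      have hC := congrArg C (H α (Finset.mem_insert_of_mem hα) γ (Finset.mem_insert_self γ S) hne)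
      rw [C_mul, C_mul, C_sub] at hC
      have e1 : ((γ - α)⁻¹ : Fq) = -((α - γ)⁻¹) := by
        rw [show (γ - α : Fq) = -(α - γ) from (neg_sub α γ).symm, inv_neg]
      rw [e1, map_neg, neg_mul, map_neg]
      linear_combination (X ^ 2 *
        ∏ β ∈ S.erase α, (1 - C (algebraMap Fq R ((β - α)⁻¹) * c) * X)) * hC
    have h0 := Finset.sum_eq_zero per
    rw [Finset.sum_sub_distrib, Finset.sum_add_distrib, Finset.sum_sub_distrib,
      ← Finset.mul_sum, ← Finset.mul_sum] at h0
    have h0' : C (x γ) * X * ∑ α ∈ S, (C (algebraMap Fq R ((α - γ)⁻¹) * c) * X *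
            ∏ β ∈ S.erase α, (1 - C (algebraMap Fq R ((β - α)⁻¹) * c) * X))
        = C (x γ) * X * ∑ β ∈ S, (C (algebraMap Fq R ((β - γ)⁻¹) * c) * X *
            ∏ δ ∈ S.erase β, (1 - C (algebraMap Fq R ((δ - β)⁻¹) * c) * X)) := rfl
    rw [h0'] at h0
    linear_combination h0

lemma coset_prod (c : R) (x : Fq → R)
    (H : ∀ α β : Fq, α ≠ β → x α * x β = algebraMap Fq R ((α - β)⁻¹) * c * (x β - x α)) :
    ∏ α : Fq, (1 - C (x α) * X)
      = 1 - C (∑ α : Fq, x α) * (X - C (c ^ (q - 1)) * X ^ q) := by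
  have hq1 : q - 1 + 1 = q := Nat.succ_pred_eq_of_pos Fintype.card_pos
  have hE : (X : R[X]) * (1 - C (c ^ (q - 1)) * X ^ (q - 1)) = X - C (c ^ (q - 1)) * X ^ q := by
    have : (X : R[X]) * X ^ (q - 1) = X ^ q := by rw [← pow_succ' X (q - 1), hq1]
    linear_combination (-(C (c ^ (q - 1)))) * this
  have hin : ∀ α : Fq, ∏ β ∈ Finset.univ.erase α, (1 - C (algebraMap Fq R ((β - α)⁻¹) * c) * X)
      = 1 - C (c ^ (q - 1)) * X ^ (q - 1) := by
    intro α
    rw [← units_prod (Fq := Fq) c]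
    apply Finset.prod_nbij' (fun β => β - α) (fun β => β + α) <;>
      simp +contextual [Finset.mem_erase, sub_eq_zero, sub_ne_zero]
  rw [dagger c Finset.univ x (fun α _ β _ h => H α β h)]
  have : ∑ α : Fq, C (x α) * X *
        ∏ β ∈ Finset.univ.erase α, (1 - C (algebraMap Fq R ((β - α)⁻¹) * c) * X)
      = ∑ α : Fq, C (x α) * (X - C (c ^ (q - 1)) * X ^ q) := by
    apply Finset.sum_congr rfl
    intro α _
    rw [hin α, mul_assoc, hE]
  rw [this, ← Finset.sum_mul, ← map_sum]

/-- support contained in powers of `q`. -/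
def QSup (qn : ℕ) {R : Type} [CommRing R] (f : R[X]) : Prop :=
  ∀ k : ℕ, (∀ i : ℕ, k ≠ qn ^ i) → f.coeff k = 0

lemma qsup_pow {p e : ℕ} [Fact p.Prime] [CharP R p] {f : R[X]}
    (hf : QSup (p ^ e) f) (i : ℕ) : QSup (p ^ e) (f ^ (p ^ e) ^ i) := by
  intro k hk
  have hpos : 0 < p ^ (e * i) := pow_pos (Fact.out (p := p.Prime)).pos _
  have hpow : f ^ (p ^ e) ^ i = Polynomial.map ((frobenius R p) ^ (e * i))
      (Polynomial.expand R (p ^ (e * i)) f) := by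
    rw [← pow_mul]
    rw [← iterateFrobenius_eq_pow]
    exact (Polynomial.map_iterateFrobenius_expand p f (e * i)).symm
  rw [hpow, Polynomial.coeff_map, Polynomial.coeff_expand hpos]
  by_cases hdvd : p ^ (e * i) ∣ k
  · rw [if_pos hdvd]
    have hzero : f.coeff (k / p ^ (e * i)) = 0 := by
      apply hf
      intro j hj
      apply hk (i + j)
      rw [← Nat.div_mul_cancel hdvd, hj, ← pow_mul, ← pow_add, ← pow_mul]
      congr 1
      ring
    rw [hzero, map_zero]
  · rw [if_neg hdvd, map_zero]

lemma qsup_comp {p e : ℕ} [Fact p.Prime] [CharP R p] {f g : R[X]}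
    (hf : QSup (p ^ e) f) (hg : QSup (p ^ e) g) : QSup (p ^ e) (f.comp g) := by
  intro k hk
  rw [Polynomial.comp_eq_sum_left, Polynomial.sum_def, Polynomial.finset_sum_coeff]
  apply Finset.sum_eq_zero
  intro n _
  rw [Polynomial.coeff_C_mul]
  by_cases hqn : ∃ i, n = (p ^ e) ^ i
  · obtain ⟨i, rfl⟩ := hqn
    rw [qsup_pow hg i k hk, mul_zero]
  · push_neg at hqn
    rw [hf n hqn, zero_mul]

lemma qsup_E {qq : ℕ} (hqq : 2 ≤ qq) (c' : R) : QSup qq (X - C c' * X ^ qq) := by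
  intro k hk
  have h1 : k ≠ 1 := by simpa using hk 0
  have h2 : k ≠ qq := by simpa using hk 1
  rw [Polynomial.coeff_sub, Polynomial.coeff_X, Polynomial.coeff_C_mul, Polynomial.coeff_X_pow]
  rw [if_neg (fun h : (1:ℕ) = k => h1 h.symm)]
  simp [h2]

lemma eRho_eq {V : Type} [AddCommGroup V] [Module Fq V] [Fintype V] (ρ : V → R) :
    eRho (Fq := Fq) ρ
      = X * ∏ v ∈ Finset.univ.filter (fun v : V => v ≠ 0), (1 - C (ρ v) * X) := by
  unfold eRho
  congr 1
  rw [← finprod_mem_coe_finset]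
  congr 1
  ext v; simp

lemma main {p e : ℕ} [Fact p.Prime] [CharP R p] (hcard : Fintype.card Fq = p ^ e) :
    ∀ (n : ℕ) (V : Type) [AddCommGroup V] [Module Fq V] [FiniteDimensional Fq V],
      Module.finrank Fq V = n → ∀ ρ : V → R, IsFqRecip Fq ρ →
        QSup (Fintype.card Fq) (eRho (Fq := Fq) ρ) := by
  intro n
  induction n using Nat.strong_induction_on with
  | _ n IH =>
  intro V _ _ _ hrank ρ hρ
  have hfinV : Finite V := Module.finite_of_finite Fq
  letI : Fintype V := Fintype.ofFinite V
  rcases Nat.eq_zero_or_pos n with hn0 | hnpos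
  · -- rank 0
    subst hn0
    have hsub : Subsingleton V := by
      rwa [← Module.finrank_zero_iff (R := Fq)]
    have hfe : Finset.univ.filter (fun v : V => v ≠ 0) = ∅ := by
      apply Finset.filter_false_of_mem
      intro v _
      simp [Subsingleton.elim v 0]
    intro k hk
    rw [eRho_eq, hfe, Finset.prod_empty, mul_one]
    rw [Polynomial.coeff_X]
    have : k ≠ 1 := by simpa using hk 0
    simp [Ne.symm this]
  · -- positive rank
    have hnontriv : Nontrivial V := by
      rw [← Module.finrank_pos_iff (R := Fq)]
      omega
    obtain ⟨u, hu⟩ := exists_ne (0 : V)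
    set c : R := ρ u with hc
    set L : Submodule Fq V := Submodule.span Fq {u} with hL
    set π : V →ₗ[Fq] V ⧸ L := L.mkQ with hπ
    have hfinVbar : Finite (V ⧸ L) := Module.finite_of_finite Fq
    letI : Fintype (V ⧸ L) := Fintype.ofFinite (V ⧸ L)
    have hsurj : Function.Surjective π := Submodule.mkQ_surjective L
    set sec : V ⧸ L → V := Function.surjInv hsurj with hsecdef
    have hsec : ∀ z : V ⧸ L, π (sec z) = z := fun z => Function.surjInv_eq hsurj z
    have hπu : π u = 0 := by
      rw [hπ, Submodule.mkQ_apply, Submodule.Quotient.mk_eq_zero]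
      exact Submodule.mem_span_singleton_self u
    have hπzero : ∀ v : V, π v = 0 ↔ v ∈ L := by
      intro v
      rw [hπ, Submodule.mkQ_apply, Submodule.Quotient.mk_eq_zero]
    -- basic consequences of reciprocity
    have hrs : ∀ β : Fq, β ≠ 0 → ∀ v : V, v ≠ 0 → ρ (β • v) = algebraMap Fq R β⁻¹ * ρ v := by
      intro β hβ v hv
      have h2 := hρ.2 (Units.mk0 β hβ) v hv
      simp only [Units.val_mk0] at h2
      have h3 : algebraMap Fq R β⁻¹ * (algebraMap Fq R β * ρ (β • v))
          = algebraMap Fq R β⁻¹ * ρ v := by rw [h2]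
      rwa [← mul_assoc, ← map_mul, inv_mul_cancel₀ hβ, map_one, one_mul] at h3
    have hneg : ∀ v : V, v ≠ 0 → ρ (-v) = -ρ v := by
      intro v hv
      have h1 := hrs (-1) (by norm_num) v hv
      rw [neg_one_smul] at h1
      rw [h1, inv_neg, inv_one, map_neg, map_one, neg_one_mul]
    have hline : ∀ β : Fq, β ≠ 0 → ρ (β • u) = algebraMap Fq R β⁻¹ * c :=
      fun β hβ => hrs β hβ u hu
    have hne2 : ∀ w : V, π w ≠ 0 → ∀ α : Fq, w + α • u ≠ 0 := by
      intro w hw α h0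
      apply hw
      have hw' : w = -(α • u) := by
        rw [eq_neg_iff_add_eq_zero]; exact h0
      rw [hw', map_neg, map_smul, hπu, smul_zero, neg_zero]
    have hpair : ∀ w : V, π w ≠ 0 → ∀ α β : Fq, α ≠ β →
        ρ (w + α • u) * ρ (w + β • u)
          = algebraMap Fq R ((α - β)⁻¹) * c * (ρ (w + β • u) - ρ (w + α • u)) := by
      intro w hw α β hne
      have h1 : w + α • u ≠ 0 := hne2 w hw α
      have h2 : -(w + β • u) ≠ 0 := neg_ne_zero.2 (hne2 w hw β)
      have h3 : (w + α • u) + -(w + β • u) = (α - β) • u := by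
        rw [sub_smul]; abel
      have h4 : (w + α • u) + -(w + β • u) ≠ 0 := by
        rw [h3]; exact smul_ne_zero (sub_ne_zero.2 hne) hu
      have h5 := hρ.1 _ _ h1 h2 h4
      rw [h3, hneg _ (hne2 w hw β), hline (α - β) (sub_ne_zero.2 hne)] at h5
      linear_combination -h5
    -- the induced map on the quotient
    set ρt : V ⧸ L → R := fun z => ∑ α : Fq, ρ (sec z + α • u) with hρt
    have hshift : ∀ w w' : V, π w = π w' →
        ∑ α : Fq, ρ (w + α • u) = ∑ α : Fq, ρ (w' + α • u) := by
      intro w w' hww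
      have hmem : w - w' ∈ L := by
        rw [← hπzero, map_sub, hww, sub_self]
      rw [hL, Submodule.mem_span_singleton] at hmem
      obtain ⟨β, hβ⟩ := hmem
      have hw : w = w' + β • u := by
        rw [hβ]; abel
      have hcong : ∀ α : Fq, w + α • u = w' + (β + α) • u := by
        intro α; rw [hw, add_smul]; abel
      calc ∑ α : Fq, ρ (w + α • u) = ∑ α : Fq, ρ (w' + (β + α) • u) := by
            apply Finset.sum_congr rfl; intro α _; rw [hcong α]
        _ = ∑ α : Fq, ρ (w' + α • u) :=
            Fintype.sum_equiv (Equiv.addLeft β) _ _ (fun α => rfl)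
    have hρtz : ∀ (z : V ⧸ L) (w : V), π w = z → ρt z = ∑ α : Fq, ρ (w + α • u) := by
      intro z w hwz
      exact hshift (sec z) w (by rw [hsec, hwz])
    have hρt_rec : IsFqRecip Fq ρt := by
      constructor
      · intro z1 z2 hz1 hz2 hz12
        set a : V := sec z1 with ha
        set b : V := sec z2 with hb
        have hπa : π a = z1 := hsec z1
        have hπb : π b = z2 := hsec z2
        have hπab : π (a + b) = z1 + z2 := by rw [map_add, hπa, hπb]
        have hZ : ρt (z1 + z2) = ∑ γ : Fq, ρ (a + b + γ • u) := hρtz _ _ hπab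
        have hZ1 : ρt z1 = ∑ α : Fq, ρ (a + α • u) := rfl
        have hZ2 : ρt z2 = ∑ α : Fq, ρ (b + α • u) := rfl
        have hπa0 : π a ≠ 0 := by rw [hπa]; exact hz1
        have hπb0 : π b ≠ 0 := by rw [hπb]; exact hz2
        have hπab0 : π (a + b) ≠ 0 := by rw [hπab]; exact hz12
        have key : ∀ α β : Fq, ρ (a + α • u) * ρ (b + β • u)
            = ρ (a + b + (α + β) • u) * (ρ (a + α • u) + ρ (b + β • u)) := by
          intro α β
          have hsum : (a + α • u) + (b + β • u) = a + b + (α + β) • u := by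
            rw [add_smul]; abel
          have h := hρ.1 (a + α • u) (b + β • u) (hne2 a hπa0 α) (hne2 b hπb0 β)
            (by rw [hsum]; exact hne2 (a + b) hπab0 (α + β))
          rwa [hsum] at h
        rw [hZ, hZ1, hZ2, Finset.sum_mul_sum]
        have step1 : ∀ α : Fq, ∑ β : Fq, ρ (a + α • u) * ρ (b + β • u)
            = ρ (a + α • u) * (∑ γ : Fq, ρ (a + b + γ • u))
              + ∑ β : Fq, ρ (a + b + (α + β) • u) * ρ (b + β • u) := by
          intro α
          have : ∀ β : Fq, ρ (a + α • u) * ρ (b + β • u)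
              = ρ (a + b + (α + β) • u) * ρ (a + α • u)
                + ρ (a + b + (α + β) • u) * ρ (b + β • u) := by
            intro β
            rw [← mul_add, key α β]
          rw [Finset.sum_congr rfl (fun β _ => this β), Finset.sum_add_distrib]
          congr 1
          rw [← Finset.sum_mul, mul_comm]
          congr 1
          exact Fintype.sum_equiv (Equiv.addLeft α) _ _ (fun β => rfl)
        rw [Finset.sum_congr rfl (fun α (_ : α ∈ Finset.univ) => step1 α),
          Finset.sum_add_distrib, ← Finset.sum_mul]
        have step2 : ∑ α : Fq, ∑ β : Fq, ρ (a + b + (α + β) • u) * ρ (b + β • u)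
            = (∑ γ : Fq, ρ (a + b + γ • u)) * ∑ β : Fq, ρ (b + β • u) := by
          rw [Finset.sum_comm]
          have inner : ∀ β : Fq, ∑ α : Fq, ρ (a + b + (α + β) • u) * ρ (b + β • u)
              = (∑ γ : Fq, ρ (a + b + γ • u)) * ρ (b + β • u) := by
            intro β
            rw [← Finset.sum_mul]
            congr 1
            exact Fintype.sum_equiv (Equiv.addRight β) _ _ (fun α => rfl)
          rw [Finset.sum_congr rfl (fun β (_ : β ∈ Finset.univ) => inner β), ← Finset.mul_sum]
        rw [step2]
        ring
      · intro βu z hz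
        set β : Fq := (βu : Fq) with hβdef
        have hβ : β ≠ 0 := βu.ne_zero
        have hπβ : π (β • sec z) = β • z := by rw [map_smul, hsec]
        have h1 : ρt (β • z) = ∑ α : Fq, ρ (β • sec z + α • u) := hρtz _ _ hπβ
        have hsecz0 : π (sec z) ≠ 0 := by rw [hsec]; exact hz
        have h2 : ∀ α : Fq, β • sec z + α • u = β • (sec z + (β⁻¹ * α) • u) := by
          intro α
          rw [smul_add, smul_smul, mul_inv_cancel_left₀ hβ]
        have h3 : ∀ α : Fq, ρ (β • sec z + α • u)
            = algebraMap Fq R β⁻¹ * ρ (sec z + (β⁻¹ * α) • u) := by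
          intro α
          rw [h2 α]
          exact hrs β hβ _ (hne2 (sec z) hsecz0 (β⁻¹ * α))
        have h4 : ∑ α : Fq, ρ (sec z + (β⁻¹ * α) • u) = ∑ μ : Fq, ρ (sec z + μ • u) := by
          exact Fintype.sum_equiv (Equiv.mulLeft₀ β⁻¹ (inv_ne_zero hβ)) _ _ (fun μ => rfl)
        rw [h1, Finset.sum_congr rfl (fun α (_ : α ∈ Finset.univ) => h3 α), ← Finset.mul_sum, h4,
          ← mul_assoc, ← map_mul, mul_inv_cancel₀ hβ, map_one, one_mul]
    -- decomposition of the big product along fibers of π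
    set E : R[X] := X - C (c ^ (q - 1)) * X ^ q with hEdef
    have hq1 : q - 1 + 1 = q := Nat.succ_pred_eq_of_pos Fintype.card_pos
    have hXE : (X : R[X]) * (1 - C (c ^ (q - 1)) * X ^ (q - 1)) = E := by
      have h2 : (X : R[X]) * X ^ (q - 1) = X ^ q := by rw [← pow_succ' X (q - 1), hq1]
      rw [hEdef]
      linear_combination (-(C (c ^ (q - 1)))) * h2
    have hfib0 : ∏ v ∈ (Finset.univ.filter (fun v : V => v ≠ 0)).filter
          (fun v => π v = 0), (1 - C (ρ v) * X)
        = 1 - C (c ^ (q - 1)) * X ^ (q - 1) := by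
      rw [← units_prod (Fq := Fq) c]
      symm
      refine Finset.prod_bij (fun α _ => α • u) ?_ ?_ ?_ ?_
      · intro α hα
        have hα0 : α ≠ 0 := (Finset.mem_erase.1 hα).1
        simp only [Finset.mem_filter, Finset.mem_univ, true_and]
        refine ⟨smul_ne_zero hα0 hu, ?_⟩
        rw [map_smul, hπu, smul_zero]
      · intro α hα α' hα' hαα'
        exact smul_left_injective Fq hu hαα'
      · intro v hv
        simp only [Finset.mem_filter, Finset.mem_univ, true_and] at hv
        obtain ⟨hv0, hvz⟩ := hv
        have : v ∈ L := (hπzero v).1 hvz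
        rw [hL, Submodule.mem_span_singleton] at this
        obtain ⟨β, hβ⟩ := this
        have hβ0 : β ≠ 0 := by rintro rfl; rw [zero_smul] at hβ; exact hv0 hβ.symm
        exact ⟨β, Finset.mem_erase.2 ⟨hβ0, Finset.mem_univ β⟩, hβ⟩
      · intro α hα
        have hα0 : α ≠ 0 := (Finset.mem_erase.1 hα).1
        rw [hline α hα0]
    have hfibz : ∀ z ∈ Finset.univ.erase (0 : V ⧸ L),
        ∏ v ∈ (Finset.univ.filter (fun v : V => v ≠ 0)).filter
          (fun v => π v = z), (1 - C (ρ v) * X) = 1 - C (ρt z) * E := by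
      intro z hz
      have hz0 : z ≠ 0 := Finset.ne_of_mem_erase hz
      have hfilter : (Finset.univ.filter (fun v : V => v ≠ 0)).filter (fun v => π v = z)
          = Finset.univ.filter (fun v : V => π v = z) := by
        ext v
        simp only [Finset.filter_filter, Finset.mem_filter, Finset.mem_univ, true_and]
        constructor
        · exact fun h => h.2
        · intro h
          refine ⟨?_, h⟩
          rintro rfl
          rw [map_zero] at h
          exact hz0 h.symm
      rw [hfilter]
      have hbij : ∏ v ∈ Finset.univ.filter (fun v : V => π v = z), (1 - C (ρ v) * X)
          = ∏ α : Fq, (1 - C (ρ (sec z + α • u)) * X) := by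
        symm
        refine Finset.prod_bij (fun α _ => sec z + α • u) ?_ ?_ ?_ ?_
        · intro α _
          simp only [Finset.mem_filter, Finset.mem_univ, true_and]
          rw [map_add, hsec, map_smul, hπu, smul_zero, add_zero]
        · intro α _ α' _ h
          have := add_left_cancel h
          exact smul_left_injective Fq hu this
        · intro v hv
          simp only [Finset.mem_filter, Finset.mem_univ, true_and] at hv
          have : v - sec z ∈ L := by
            rw [← hπzero, map_sub, hv, hsec, sub_self]
          rw [hL, Submodule.mem_span_singleton] at this
          obtain ⟨β, hβ⟩ := this
          refine ⟨β, Finset.mem_univ β, ?_⟩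
          show sec z + β • u = v
          rw [hβ]; abel
        · intro α _; rfl
      rw [hbij, coset_prod c (fun α => ρ (sec z + α • u))
        (hpair (sec z) (by rw [hsec]; exact hz0))]
    have hsplit : eRho (Fq := Fq) ρ
        = E * ∏ z ∈ Finset.univ.erase (0 : V ⧸ L), (1 - C (ρt z) * E) := by
      rw [eRho_eq]
      rw [← Finset.prod_fiberwise_of_maps_to (g := fun v => π v)
        (t := (Finset.univ : Finset (V ⧸ L))) (fun v _ => Finset.mem_univ _)
        (fun v => 1 - C (ρ v) * X)]
      rw [← Finset.mul_prod_erase Finset.univ _ (Finset.mem_univ (0 : V ⧸ L))]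
      rw [hfib0, Finset.prod_congr rfl hfibz, ← mul_assoc, hXE]
    have hcomp : eRho (Fq := Fq) ρ = (eRho (Fq := Fq) ρt).comp E := by
      rw [hsplit, eRho_eq (V := V ⧸ L) ρt, Finset.filter_ne',
        Polynomial.mul_comp, Polynomial.X_comp, Polynomial.prod_comp]
      congr 1
      apply Finset.prod_congr rfl
      intro z _
      rw [Polynomial.sub_comp, Polynomial.one_comp, Polynomial.mul_comp,
        Polynomial.C_comp, Polynomial.X_comp]
    have hrk : Module.finrank Fq (V ⧸ L) < n := by
      have h1 := Submodule.finrank_quotient_add_finrank L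
      have h2 : Module.finrank Fq L = 1 := finrank_span_singleton hu
      omega
    have hQt : QSup q (eRho (Fq := Fq) ρt) := IH _ hrk (V ⧸ L) rfl ρt hρt_rec
    have hQE : QSup q E := by
      rw [hEdef]
      exact qsup_E Fintype.one_lt_card (c ^ (q - 1))
    rw [hcomp]
    rw [hcard] at hQt hQE ⊢
    exact qsup_comp hQt hQE

end Stmt17Aux

/-- **Proposition 1.15**: for an `𝔽_q`-reciprocal map `ρ`, the polynomial
`e_ρ(X) = X ∏_{v ∈ V∖{0}} (1 - ρ(v)X)` is `𝔽_q`-linear: every coefficient whose index is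
not a power of `q = |𝔽_q|` vanishes. -/
theorem statement17 (Fq : Type) [Field Fq] [Fintype Fq]
    (V : Type) [AddCommGroup V] [Module Fq V] [FiniteDimensional Fq V]
    (R : Type) [CommRing R] [Algebra Fq R]
    (ρ : V → R) (h : IsFqRecip Fq ρ)
    (k : ℕ) (hk : ∀ i : ℕ, k ≠ Fintype.card Fq ^ i) :
    (eRho (Fq := Fq) ρ).coeff k = 0 := by
  rcases subsingleton_or_nontrivial R with hR | hR
  · exact Subsingleton.elim _ _
  · obtain ⟨p, hp⟩ := CharP.exists Fq
    haveI := hp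
    haveI hp' : Fact p.Prime := Fact.mk (CharP.char_is_prime Fq p)
    obtain ⟨nn, hnp, hcard⟩ := FiniteField.card Fq p
    haveI : CharP R p := charP_of_injective_ringHom (algebraMap Fq R).injective p
    exact Stmt17Aux.main hcard (Module.finrank Fq V) V rfl ρ h k hk

end
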